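/- Let w = v·t_r be an element of the affine Weyl group Ŵ, with v ∈ W and r ∈ Q∨. Then: (i) if w is dominant, then r lies in the negative of the closure of the fundamental Weyl chamber, i.e. (r, α) ≤ 0 for all α ∈ Π; (ii) the map from the set of dominant elements of Ŵ to Q∨ sending w = v·t_r to v(r) is a bijection. -/

import Mathlib

open scoped RealInnerProductSpace
open Module

noncomputable section

variable {V : Type*} [NormedAddCommGroup V] [InnerProductSpace ℝ V]

/-- The underlying function of the orthogonal reflection in the hyperplane
orthogonal to `α` (the identity if `α = 0`). -/
def reflFun (α : V) (x : V) : V := x - (2 * ⟪α, x⟫ / ⟪α, α⟫) • α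

lemma reflFun_involutive (α : V) : Function.Involutive (reflFun α) := by
  intro x
  by_cases h : α = 0
  · simp [reflFun, h]
  · have hs : ⟪α, α⟫ ≠ 0 := inner_self_ne_zero.mpr h
    have h1 : ⟪α, x - (2 * ⟪α, x⟫ / ⟪α, α⟫) • α⟫ = -⟪α, x⟫ := by
      rw [inner_sub_right, real_inner_smul_right]
      field_simp
      ring
    simp only [reflFun]
    rw [h1, show 2 * -⟪α, x⟫ / ⟪α, α⟫ = -(2 * ⟪α, x⟫ / ⟪α, α⟫) by ring,
      neg_smul, sub_neg_eq_add]
    abel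

/-- The orthogonal reflection in the hyperplane orthogonal to `α`, as a linear
equivalence (the identity if `α = 0`). -/
def sRefl (α : V) : V ≃ₗ[ℝ] V where
  toFun := reflFun α
  map_add' x y := by
    simp only [reflFun, inner_add_right]
    rw [show 2 * (⟪α, x⟫ + ⟪α, y⟫) / ⟪α, α⟫
        = 2 * ⟪α, x⟫ / ⟪α, α⟫ + 2 * ⟪α, y⟫ / ⟪α, α⟫ by ring, add_smul]
    abel
  map_smul' c x := by
    simp only [reflFun, real_inner_smul_right, RingHom.id_apply, smul_sub, smul_smul]
    congr 2
    ring
  invFun := reflFun α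
  left_inv := reflFun_involutive α
  right_inv := reflFun_involutive α

/-- The coroot `α∨ = 2α/(α,α)` of a vector `α`. -/
def corootVec (α : V) : V := (2 / ⟪α, α⟫) • α

/-- The (affine) hyperplane `{x | (x, μ) = k}`. -/
def rootHyperplane (μ : V) (k : ℝ) : Set V := {x : V | ⟪x, μ⟫ = k}

/-- `R` is a region of the hyperplane arrangement whose hyperplanes are encoded by the
pairs `(μ, k) ∈ A` (the hyperplane `{x | (x,μ) = k}`): a connected component of the
complement of the union of the hyperplanes. -/
def IsRegionOf (A : Set (V × ℝ)) (R : Set V) : Prop :=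
  ∃ x ∈ (⋃ h ∈ A, rootHyperplane h.1 h.2)ᶜ,
    R = connectedComponentIn (⋃ h ∈ A, rootHyperplane h.1 h.2)ᶜ x

open Classical in
/-- The characteristic polynomial of the hyperplane arrangement encoded by
`A : Set (V × ℝ)` in an ambient space of dimension `p`, evaluated at `t`, via
Whitney's theorem: `χ(A,t) = ∑ (-1)^{#S} t^{dim ∩ S}`, the sum being over all central
subarrangements `S ⊆ A` (junk value `0` if `A` is infinite). -/
noncomputable def charPolyEval (p : ℕ) (A : Set (V × ℝ)) (t : ℝ) : ℝ :=
  if hA : A.Finite then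
    ∑ S ∈ hA.toFinset.powerset,
      if (⋂ h ∈ (S : Set (V × ℝ)), rootHyperplane h.1 h.2).Nonempty then
        (-1 : ℝ) ^ S.card *
          t ^ (p - Module.finrank ℝ (Submodule.span ℝ (Prod.fst '' (S : Set (V × ℝ)))))
      else 0
  else 0

/-- The linear action of `w = v·t_r ∈ Ŵ` on `V ⊕ ℝδ`:
`w(μ + kδ) = v(μ) + (k - (μ,r))δ`. -/
def affAct (v : V ≃ₗ[ℝ] V) (r : V) (β : V × ℝ) : V × ℝ :=
  (v β.1, β.2 - ⟪β.1, r⟫)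

/-- The linear action of `w⁻¹` on `V ⊕ ℝδ`, for `w = v·t_r ∈ Ŵ`:
`w⁻¹(μ + kδ) = v⁻¹(μ) + (k + (v⁻¹μ, r))δ`. -/
def affActInv (v : V ≃ₗ[ℝ] V) (r : V) (β : V × ℝ) : V × ℝ :=
  (v.symm β.1, β.2 + ⟪v.symm β.1, r⟫)

/-- The affine `∗`-action of `w = v·t_r ∈ Ŵ` on `V`: `w ∗ x = v(x + r)`. -/
def affStar (v : V ≃ₗ[ℝ] V) (r : V) (x : V) : V := v (x + r)

/-- The affine `∗`-action of `w⁻¹` on `V`, for `w = v·t_r ∈ Ŵ`: `w⁻¹ ∗ x = v⁻¹(x) - r`. -/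
def affStarInv (v : V ≃ₗ[ℝ] V) (r : V) (x : V) : V := v.symm x - r

/-- An irreducible reduced crystallographic root system `Δ` of rank `p`, spanning a real
inner product space `V`, together with a choice of positive system `Δ⁺ = pos`, simple
roots `α₁, …, α_p`, and the highest root `θ`. -/
structure RootSystemData (V : Type*) [NormedAddCommGroup V] [InnerProductSpace ℝ V]
    (p : ℕ) where
  /-- the set of roots -/
  Δ : Set V
  finite : Δ.Finite
  zero_notMem : (0 : V) ∉ Δ
  span_eq_top : Submodule.span ℝ Δ = ⊤
  finrank_eq : Module.finrank ℝ V = p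
  neg_mem : ∀ α ∈ Δ, -α ∈ Δ
  /-- reduced: the only multiples of a root that are roots are `±α` -/
  reduced : ∀ α ∈ Δ, ∀ c : ℝ, c • α ∈ Δ → c = 1 ∨ c = -1
  /-- crystallographic: Cartan integers -/
  crystallographic : ∀ α ∈ Δ, ∀ β ∈ Δ, ∃ n : ℤ, 2 * ⟪α, β⟫ / ⟪α, α⟫ = (n : ℝ)
  reflect_mem : ∀ α ∈ Δ, ∀ β ∈ Δ, sRefl α β ∈ Δ
  /-- irreducible: no splitting into two orthogonal parts -/
  irred : ∀ S T : Set V, Δ = S ∪ T → (∀ a ∈ S, ∀ b ∈ T, ⟪a, b⟫ = 0) → S = ∅ ∨ T = ∅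
  /-- the simple roots `α₁, …, α_p` -/
  simpleRoot : Fin p → V
  simpleRoot_mem : ∀ i, simpleRoot i ∈ Δ
  simpleRoot_indep : LinearIndependent ℝ simpleRoot
  /-- the positive roots `Δ⁺` -/
  pos : Set V
  pos_def : pos = {α ∈ Δ | ∃ c : Fin p → ℕ, α = ∑ i, (c i : ℝ) • simpleRoot i}
  pos_or_neg : ∀ α ∈ Δ, α ∈ pos ∨ -α ∈ pos
  /-- the highest root -/
  θ : V
  θ_mem : θ ∈ pos
  θ_highest : ∀ α ∈ pos, ∃ c : Fin p → ℕ, θ = α + ∑ i, (c i : ℝ) • simpleRoot i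

namespace RootSystemData

variable {p : ℕ} (RS : RootSystemData V p)

/-- The coroot lattice `Q∨`, generated by the coroots of the roots. -/
def corootLattice : AddSubgroup V := AddSubgroup.closure (corootVec '' RS.Δ)

/-- The coweight lattice `P∨ = {x | (x, α) ∈ ℤ for all roots α}`. -/
def coweightLattice : AddSubgroup V where
  carrier := {x : V | ∀ α ∈ RS.Δ, ∃ n : ℤ, ⟪x, α⟫ = (n : ℝ)}
  zero_mem' := fun α _ => ⟨0, by simp⟩
  add_mem' := by
    intro x y hx hy α hα
    obtain ⟨n, hn⟩ := hx α hα
    obtain ⟨m, hm⟩ := hy α hα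
    exact ⟨n + m, by rw [inner_add_left, hn, hm]; push_cast; ring⟩
  neg_mem' := by
    intro x hx α hα
    obtain ⟨n, hn⟩ := hx α hα
    exact ⟨-n, by rw [inner_neg_left, hn]; push_cast; ring⟩

/-- The index of connection `f = [P∨ : Q∨]`. -/
noncomputable def indexOfConnection : ℕ :=
  RS.corootLattice.relIndex RS.coweightLattice

/-- The Weyl group `W`, generated by the reflections in the roots. -/
def weylGroup : Subgroup (V ≃ₗ[ℝ] V) :=
  Subgroup.closure {w : V ≃ₗ[ℝ] V | ∃ α ∈ RS.Δ, w = sRefl α}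

/-- The partial order `μ ≼ γ` on roots: `γ - μ` is a nonnegative integer combination of
the simple roots. -/
def rootLe (μ γ : V) : Prop :=
  ∃ c : Fin p → ℕ, γ = μ + ∑ i, (c i : ℝ) • RS.simpleRoot i

/-- An ideal of `Δ⁺`. -/
def IsIdeal (I : Set V) : Prop :=
  I ⊆ RS.pos ∧ ∀ γ ∈ I, ∀ μ ∈ RS.pos, γ + μ ∈ RS.Δ → γ + μ ∈ I

/-- An antichain in the poset `(Δ⁺, ≼)`. -/
def IsRootAntichain (Γ : Set V) : Prop :=
  Γ ⊆ RS.pos ∧ ∀ μ ∈ Γ, ∀ γ ∈ Γ, RS.rootLe μ γ → μ = γ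

/-- The set of minimal elements (generators, for an ideal) of a subset of `Δ⁺`. -/
def gens (I : Set V) : Set V := {γ ∈ I | ∀ μ ∈ I, RS.rootLe μ γ → μ = γ}

/-- The ideal `I⟨Γ⟩` generated by an antichain `Γ`. -/
def idealGen (Γ : Set V) : Set V := {μ ∈ RS.pos | ∃ γ ∈ Γ, RS.rootLe γ μ}

/-- The set `Ξ(I)` of maximal elements of `Δ⁺ \ I`. -/
def XiSet (I : Set V) : Set V :=
  {γ ∈ RS.pos \ I | ∀ μ ∈ RS.pos \ I, RS.rootLe γ μ → γ = μ}

/-- `k(μ, I)`: the minimal number of summands in an expression of `μ` as a sum of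
positive roots not in `I`. -/
noncomputable def kNum (I : Set V) (μ : V) : ℕ :=
  sInf {n : ℕ | ∃ f : Fin n → V, (∀ i, f i ∈ RS.pos \ I) ∧ μ = ∑ i, f i}

/-- A root is short if it is strictly shorter than the highest root `θ`. -/
def IsShort (α : V) : Prop := α ∈ RS.Δ ∧ ⟪α, α⟫ < ⟪RS.θ, RS.θ⟫

/-- The short positive roots `Δ⁺_s`. -/
def shortPos : Set V := {α ∈ RS.pos | ⟪α, α⟫ < ⟪RS.θ, RS.θ⟫}

/-- The long positive roots `Δ⁺_l`. -/
def longPos : Set V := {α ∈ RS.pos | ⟪α, α⟫ = ⟪RS.θ, RS.θ⟫}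

/-- `Δ` has roots of exactly two lengths, the squared length ratio (long over short)
being `ratio`. -/
def LengthRatio (ratio : ℝ) : Prop :=
  ∃ ls : ℝ, 0 < ls ∧ ls < ⟪RS.θ, RS.θ⟫ ∧
    (∀ α ∈ RS.Δ, ⟪α, α⟫ = ls ∨ ⟪α, α⟫ = ⟪RS.θ, RS.θ⟫) ∧
    (∃ α ∈ RS.Δ, ⟪α, α⟫ = ls) ∧ ⟪RS.θ, RS.θ⟫ = ratio * ls

/-- `Δ` has roots of two different lengths. -/
def TwoLengths : Prop := ∃ ratio : ℝ, RS.LengthRatio ratio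

/-- The simple roots `Π(Δ⁺_s)` of the root system `Δ_s` of short roots with respect to
the positive system `Δ⁺_s`: the short positive roots that are not sums of two short
positive roots. -/
def shortSimple : Set V :=
  {α ∈ RS.shortPos | ¬ ∃ β ∈ RS.shortPos, ∃ γ ∈ RS.shortPos, α = β + γ}

/-- The positive affine roots `Δ̂⁺`, an affine root `μ + kδ` being encoded as the pair
`(μ, k)`. -/
def affPos : Set (V × ℝ) :=
  {β : V × ℝ | β.1 ∈ RS.Δ ∧ (0 < β.2 ∨ (β.2 = 0 ∧ β.1 ∈ RS.pos))}

/-- A pair `(v, r)` with `v ∈ W`, `r ∈ Q∨` represents the element `w = v·t_r` of the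
affine Weyl group `Ŵ = W ⋉ Q∨`; it is dominant if `w(α) ∈ Δ̂⁺` for all `α ∈ Π`. -/
def IsDominantPair (v : V ≃ₗ[ℝ] V) (r : V) : Prop :=
  v ∈ RS.weylGroup ∧ r ∈ RS.corootLattice ∧
    ∀ i, affAct v r (RS.simpleRoot i, 0) ∈ RS.affPos

/-- `N(w) = {β ∈ Δ̂⁺ | w(β) ∈ -Δ̂⁺}` for `w = v·t_r`. -/
def Nset (v : V ≃ₗ[ℝ] V) (r : V) : Set (V × ℝ) :=
  {β : V × ℝ | β ∈ RS.affPos ∧ -(affAct v r β) ∈ RS.affPos}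

/-- The first layer ideal `I_w = {μ ∈ Δ⁺ | δ - μ ∈ N(w)}` of `w = v·t_r`. -/
def firstLayerIdeal (v : V ≃ₗ[ℝ] V) (r : V) : Set V :=
  {μ ∈ RS.pos | ((-μ, (1 : ℝ)) : V × ℝ) ∈ RS.Nset v r}

/-- `w = v·t_r` is minimal: dominant, and for every affine simple root `α ∈ Π̂`,
writing `w⁻¹(α) = kδ + μ`, one has `k ≥ -1`. -/
def IsMinimalPair (v : V ≃ₗ[ℝ] V) (r : V) : Prop :=
  RS.IsDominantPair v r ∧
    (∀ i, -1 ≤ (affActInv v r (RS.simpleRoot i, 0)).2) ∧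
    -1 ≤ (affActInv v r (-RS.θ, 1)).2

/-- `w = v·t_r` is maximal: dominant, and for every affine simple root `α ∈ Π̂`,
writing `w⁻¹(α) = kδ + μ`, one has `k ≤ 1`. -/
def IsMaximalPair (v : V ≃ₗ[ℝ] V) (r : V) : Prop :=
  RS.IsDominantPair v r ∧
    (∀ i, (affActInv v r (RS.simpleRoot i, 0)).2 ≤ 1) ∧
    (affActInv v r (-RS.θ, 1)).2 ≤ 1

/-- `w = v·t_r` is `s`-minimal: dominant, `k ≥ -1` for short simple `α`, and `k ≥ 0`
for `α ∈ Π̂_l = Π_l ∪ {α₀}`, where `w⁻¹(α) = kδ + μ`. -/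
def IsSMinimalPair (v : V ≃ₗ[ℝ] V) (r : V) : Prop :=
  RS.IsDominantPair v r ∧
    (∀ i, RS.IsShort (RS.simpleRoot i) →
      -1 ≤ (affActInv v r (RS.simpleRoot i, 0)).2) ∧
    (∀ i, ¬ RS.IsShort (RS.simpleRoot i) →
      0 ≤ (affActInv v r (RS.simpleRoot i, 0)).2) ∧
    0 ≤ (affActInv v r (-RS.θ, 1)).2

/-- `w = v·t_r` is `s`-maximal: dominant, `k ≤ 1` for short simple `α`, and `k ≤ 0`
for `α ∈ Π̂_l = Π_l ∪ {α₀}`, where `w⁻¹(α) = kδ + μ`. -/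
def IsSMaximalPair (v : V ≃ₗ[ℝ] V) (r : V) : Prop :=
  RS.IsDominantPair v r ∧
    (∀ i, RS.IsShort (RS.simpleRoot i) →
      (affActInv v r (RS.simpleRoot i, 0)).2 ≤ 1) ∧
    (∀ i, ¬ RS.IsShort (RS.simpleRoot i) →
      (affActInv v r (RS.simpleRoot i, 0)).2 ≤ 0) ∧
    (affActInv v r (-RS.θ, 1)).2 ≤ 0

/-- The open fundamental Weyl chamber `C`. -/
def chamber : Set V := {x : V | ∀ i, 0 < ⟪x, RS.simpleRoot i⟫}

/-- The open fundamental alcove `A`. -/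
def alcove : Set V := {x : V | (∀ i, 0 < ⟪x, RS.simpleRoot i⟫) ∧ ⟪x, RS.θ⟫ < 1}

/-- The affine arrangement of all hyperplanes `{x | (x,μ) = k}`, `μ ∈ Δ⁺`, `k ∈ ℤ`,
whose regions are the alcoves. -/
def affineArrangement : Set (V × ℝ) :=
  {h : V × ℝ | h.1 ∈ RS.pos ∧ ∃ k : ℤ, h.2 = (k : ℝ)}

/-- The dominant region `R_I` of the Catalan (equivalently, Shi) arrangement attached
to an ideal `I ⊆ Δ⁺` under the Shi bijection. -/
def regionOfIdeal (I : Set V) : Set V :=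
  {x ∈ RS.chamber | (∀ γ ∈ I, 1 < ⟪x, γ⟫) ∧ ∀ γ ∈ RS.pos \ I, ⟪x, γ⟫ < 1}

/-- The semi-Catalan arrangement `Cat_s(Δ)`. -/
def semiCatalan : Set (V × ℝ) :=
  {h : V × ℝ | h.1 ∈ RS.shortPos ∧ (h.2 = -1 ∨ h.2 = 0 ∨ h.2 = 1)} ∪
    {h : V × ℝ | h.1 ∈ RS.longPos ∧ h.2 = 0}

/-- The `m`-semi-Catalan arrangement `Cat_s^m(Δ)`. -/
def semiCatalanM (m : ℕ) : Set (V × ℝ) :=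
  {h : V × ℝ | h.1 ∈ RS.shortPos ∧ ∃ k : ℤ, |k| ≤ (m : ℤ) ∧ h.2 = (k : ℝ)} ∪
    {h : V × ℝ | h.1 ∈ RS.longPos ∧ h.2 = 0}

/-- The region `R_Γ^(s)` of the semi-Catalan arrangement attached to a short
antichain `Γ`. -/
def sRegion (Γ : Set V) : Set V :=
  {x ∈ RS.chamber | (∀ μ ∈ RS.idealGen Γ ∩ RS.shortPos, 1 < ⟪x, μ⟫) ∧
    ∀ μ ∈ RS.shortPos \ RS.idealGen Γ, ⟪x, μ⟫ < 1}

/-- `α` has height `n` (sum of the coefficients over the simple roots). -/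
def heightIs (α : V) (n : ℕ) : Prop :=
  ∃ c : Fin p → ℕ, α = ∑ i, (c i : ℝ) • RS.simpleRoot i ∧ ∑ i, c i = n

/-- `e` enumerates the exponents `e₁, …, e_p` of the Weyl group `W`, characterized by the
Shapiro–Kostant–Steinberg property: for every `k ≥ 1`, the number of positive roots of
height `k` equals the number of exponents that are `≥ k`. -/
def IsExponents (e : Fin p → ℕ) : Prop :=
  ∀ k : ℕ, 1 ≤ k →
    {α ∈ RS.pos | RS.heightIs α k}.ncard = {i : Fin p | k ≤ e i}.ncard

/-- `h` is the Coxeter number of `W`, characterized by `#Δ = p·h`. -/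
def IsCoxeterNumber (h : ℕ) : Prop := RS.Δ.ncard = p * h

open Classical in
/-- `g` is the sum of the coefficients of the short simple roots in the expression
`θ = Σ cᵢ αᵢ` of the highest root. -/
def IsShortCoeffSum (g : ℕ) : Prop :=
  ∃ c : Fin p → ℕ, RS.θ = ∑ i, (c i : ℝ) • RS.simpleRoot i ∧
    (∑ i, if RS.IsShort (RS.simpleRoot i) then c i else 0) = g

open Classical in
/-- The number of constraints of the simplex
`D_max = {x | (x,αᵢ) ≤ 1 ∀i, (x,θ) ≥ 0}` that are active (hold with equality) at `x`;
for `x ∈ D_max` this is the codimension of the face of `D_max` containing `x`. -/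
noncomputable def dmaxFaceCodim (x : V) : ℕ :=
  {i : Fin p | ⟪x, RS.simpleRoot i⟫ = 1}.ncard + (if ⟪x, RS.θ⟫ = 0 then 1 else 0)

end RootSystemData

/-! ### Auxiliary development -/

section Aux

variable {V : Type*} [NormedAddCommGroup V] [InnerProductSpace ℝ V]

lemma sRefl_apply (α x : V) : sRefl α x = x - (2 * ⟪α, x⟫ / ⟪α, α⟫) • α := rfl

lemma sRefl_inv (α : V) : (sRefl α)⁻¹ = sRefl α := by
  ext x; rfl

lemma sRefl_mul_self (α : V) : sRefl α * sRefl α = 1 := by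
  ext x
  exact reflFun_involutive α x

lemma inner_sRefl (α x y : V) : ⟪sRefl α x, sRefl α y⟫ = ⟪x, y⟫ := by
  by_cases h : α = 0
  · simp [sRefl_apply, h]
  · have hs : ⟪α, α⟫ ≠ 0 := inner_self_ne_zero.mpr h
    simp only [sRefl_apply, inner_sub_left, inner_sub_right, real_inner_smul_left,
      real_inner_smul_right]
    rw [real_inner_comm y α, real_inner_comm x α]
    field_simp
    ring

lemma sRefl_neg (α : V) : sRefl (-α) = sRefl α := by
  ext x
  simp only [sRefl_apply, inner_neg_left, inner_neg_right, smul_neg, neg_neg]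
  rw [show 2 * -⟪α, x⟫ / ⟪α, α⟫ = -(2 * ⟪α, x⟫ / ⟪α, α⟫) by ring]
  rw [neg_smul, neg_neg]

lemma sRefl_apply_self (α : V) (h : α ≠ 0) : sRefl α α = -α := by
  have hs : ⟪α, α⟫ ≠ 0 := inner_self_ne_zero.mpr h
  rw [sRefl_apply]
  rw [show 2 * ⟪α, α⟫ / ⟪α, α⟫ = 2 by field_simp]
  rw [two_smul]; abel

/-- Conjugation formula for reflections. -/
lemma sRefl_conj (w : V ≃ₗ[ℝ] V) (hw : ∀ x y : V, ⟪w x, w y⟫ = ⟪x, y⟫) (α : V) :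
    sRefl (w α) = w * sRefl α * w⁻¹ := by
  ext x
  show sRefl (w α) x = w (sRefl α (w.symm x))
  have h1 : ⟪w α, x⟫ = ⟪α, w.symm x⟫ := by
    conv_lhs => rw [show x = w (w.symm x) by simp]
    rw [hw]
  have h2 : ⟪w α, w α⟫ = ⟪α, α⟫ := hw α α
  rw [sRefl_apply, sRefl_apply, map_sub, map_smul, h1, h2, LinearEquiv.apply_symm_apply]

namespace RootSystemData

variable {p : ℕ} (RS : RootSystemData V p)
include RS

lemma root_ne_zero {α : V} (h : α ∈ RS.Δ) : α ≠ 0 := fun h0 => RS.zero_notMem (h0 ▸ h)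

lemma inner_self_pos_of_mem {α : V} (h : α ∈ RS.Δ) : 0 < ⟪α, α⟫ :=
  lt_of_le_of_ne real_inner_self_nonneg
    (Ne.symm (inner_self_ne_zero.mpr (RS.root_ne_zero h)))

lemma mem_pos_iff {β : V} :
    β ∈ RS.pos ↔ β ∈ RS.Δ ∧ ∃ c : Fin p → ℕ, β = ∑ i, (c i : ℝ) • RS.simpleRoot i := by
  rw [RS.pos_def]; exact Iff.rfl

lemma pos_subset : RS.pos ⊆ RS.Δ := fun β hβ => (RS.mem_pos_iff.mp hβ).1

/-- Uniqueness of coefficients along the simple roots. -/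
lemma coeff_eq {c d : Fin p → ℝ}
    (h : ∑ i, c i • RS.simpleRoot i = ∑ i, d i • RS.simpleRoot i) : c = d := by
  have h2 := Fintype.linearIndependent_iff.mp RS.simpleRoot_indep (c - d) ?_
  · funext i; have := h2 i; simp only [Pi.sub_apply] at this; linarith
  · simp only [Pi.sub_apply, sub_smul, Finset.sum_sub_distrib, h, sub_self]

lemma rank_pos : 0 < p := by
  rcases Nat.eq_zero_or_pos p with h | h
  · exfalso
    obtain ⟨hΔ, c, hc⟩ := RS.mem_pos_iff.mp RS.θ_mem
    have hE : IsEmpty (Fin p) := by rw [h]; infer_instance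
    rw [@Finset.sum_of_isEmpty _ _ _ _ hE] at hc
    exact RS.zero_notMem (hc ▸ hΔ)
  · exact h

lemma finDim : FiniteDimensional ℝ V := by
  by_contra h
  have h0 := finrank_of_infinite_dimensional (K := ℝ) (V := V) h
  rw [RS.finrank_eq] at h0
  exact absurd (h0 ▸ RS.rank_pos) (lt_irrefl 0)

lemma simpleRoot_mem_pos (i : Fin p) : RS.simpleRoot i ∈ RS.pos := by
  rw [RS.mem_pos_iff]
  refine ⟨RS.simpleRoot_mem i, fun j => if j = i then 1 else 0, ?_⟩
  rw [Finset.sum_eq_single i]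
  · simp
  · intro b _ hb; simp [hb]
  · intro h; exact absurd (Finset.mem_univ i) h

lemma not_pos_and_neg {β : V} (h1 : β ∈ RS.pos) (h2 : -β ∈ RS.pos) : False := by
  obtain ⟨hβ, c, hc⟩ := RS.mem_pos_iff.mp h1
  obtain ⟨_, d, hd⟩ := RS.mem_pos_iff.mp h2
  have hsum : ∑ i, ((c i : ℝ) + (d i : ℝ)) • RS.simpleRoot i
      = ∑ i, (0 : ℝ) • RS.simpleRoot i := by
    simp only [add_smul, Finset.sum_add_distrib, ← hc, ← hd]
    simp
  have hco := RS.coeff_eq hsum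
  apply RS.root_ne_zero hβ
  rw [hc]
  apply Finset.sum_eq_zero
  intro i _
  have h := congrFun hco i
  have h1 : (0:ℝ) ≤ (c i : ℝ) := Nat.cast_nonneg _
  have h2 : (0:ℝ) ≤ (d i : ℝ) := Nat.cast_nonneg _
  have : (c i : ℝ) = 0 := by linarith
  rw [this, zero_smul]

/-- A vector pairing positively with all simple roots pairs positively with
all positive roots. -/
lemma inner_pos_of_chamber {x : V} (hx : ∀ i, 0 < ⟪x, RS.simpleRoot i⟫)
    {β : V} (hβ : β ∈ RS.pos) : 0 < ⟪x, β⟫ := by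
  obtain ⟨hβΔ, c, hc⟩ := RS.mem_pos_iff.mp hβ
  rw [hc, inner_sum]
  simp only [real_inner_smul_right]
  have hex : ∃ i, c i ≠ 0 := by
    by_contra hall
    push_neg at hall
    apply RS.root_ne_zero hβΔ
    rw [hc]
    simp [hall]
  obtain ⟨i, hi⟩ := hex
  apply Finset.sum_pos' (fun j _ => mul_nonneg (Nat.cast_nonneg _) (hx j).le)
  exact ⟨i, Finset.mem_univ i,
    mul_pos (by exact_mod_cast Nat.pos_of_ne_zero hi) (hx i)⟩

lemma mem_pos_iff_inner {x : V} (hx : ∀ i, 0 < ⟪x, RS.simpleRoot i⟫)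
    {β : V} (hβ : β ∈ RS.Δ) : β ∈ RS.pos ↔ 0 < ⟪x, β⟫ := by
  constructor
  · exact fun h => RS.inner_pos_of_chamber hx h
  · intro h
    rcases RS.pos_or_neg β hβ with h1 | h1
    · exact h1
    · exfalso
      have := RS.inner_pos_of_chamber hx h1
      rw [inner_neg_right] at this
      linarith

lemma inner_ne_zero_of_chamber {x : V} (hx : ∀ i, 0 < ⟪x, RS.simpleRoot i⟫)
    {β : V} (hβ : β ∈ RS.Δ) : ⟪x, β⟫ ≠ 0 := by
  rcases RS.pos_or_neg β hβ with h1 | h1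
  · exact (RS.inner_pos_of_chamber hx h1).ne'
  · have := RS.inner_pos_of_chamber hx h1
    rw [inner_neg_right] at this
    intro h0; rw [h0] at this; simp at this

/-- Elements of the Weyl group preserve the inner product. -/
lemma weyl_inner {w : V ≃ₗ[ℝ] V} (hw : w ∈ RS.weylGroup) :
    ∀ x y : V, ⟪w x, w y⟫ = ⟪x, y⟫ := by
  induction hw using Subgroup.closure_induction with
  | mem u hu => obtain ⟨α, _, rfl⟩ := hu; exact fun x y => inner_sRefl α x y
  | one => exact fun x y => rfl
  | mul u v hu hv hiu hiv =>
    intro x y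
    exact ((hiu (v x) (v y)).trans (hiv x y) : _)
  | inv u hu hiu =>
    intro x y
    have := hiu (u.symm x) (u.symm y)
    simp only [LinearEquiv.apply_symm_apply] at this
    exact this.symm

/-- The Weyl group maps roots to roots. -/
lemma weyl_maps_root {w : V ≃ₗ[ℝ] V} (hw : w ∈ RS.weylGroup) :
    ∀ α ∈ RS.Δ, w α ∈ RS.Δ := by
  induction hw using Subgroup.closure_induction with
  | mem u hu => obtain ⟨α, hα, rfl⟩ := hu; exact fun β hβ => RS.reflect_mem α hα β hβ
  | one => exact fun α hα => hα
  | mul u v hu hv hiu hiv =>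
    intro α hα
    exact (hiu (v α) (hiv α hα) : _)
  | inv u hu hiu =>
    have hmapsTo : Set.MapsTo u RS.Δ RS.Δ := fun α hα => hiu α hα
    have hinj : Set.InjOn u RS.Δ := fun a _ b _ hab => u.injective hab
    have hbij := (Set.Finite.injOn_iff_bijOn_of_mapsTo RS.finite hmapsTo).mp hinj
    intro α hα
    obtain ⟨γ, hγ, hγα⟩ := hbij.surjOn hα
    have h1 : u⁻¹ α = γ := by
      rw [← hγα]
      exact u.symm_apply_apply γ
    rwa [h1]

lemma weyl_maps_coroot {w : V ≃ₗ[ℝ] V} (hw : w ∈ RS.weylGroup) (α : V) :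
    w (corootVec α) = corootVec (w α) := by
  have h2 : ⟪w α, w α⟫ = ⟪α, α⟫ := RS.weyl_inner hw α α
  rw [corootVec, corootVec, map_smul, h2]

lemma weyl_maps_lattice {w : V ≃ₗ[ℝ] V} (hw : w ∈ RS.weylGroup) :
    ∀ r ∈ RS.corootLattice, w r ∈ RS.corootLattice := by
  intro r hr
  have hr' : r ∈ AddSubgroup.closure (corootVec '' RS.Δ) := hr
  show w r ∈ AddSubgroup.closure (corootVec '' RS.Δ)
  clear hr
  induction hr' using AddSubgroup.closure_induction with
  | mem x hx =>
    obtain ⟨α, hα, rfl⟩ := hx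
    rw [RS.weyl_maps_coroot hw]
    exact AddSubgroup.subset_closure ⟨w α, RS.weyl_maps_root hw α hα, rfl⟩
  | zero => rw [map_zero w]; exact AddSubgroup.zero_mem _
  | add x y hx hy hix hiy => rw [map_add w x y]; exact AddSubgroup.add_mem _ hix hiy
  | neg x hx hix => rw [map_neg w x]; exact AddSubgroup.neg_mem _ hix

lemma lattice_pairing {r : V} (hr : r ∈ RS.corootLattice) {β : V} (hβ : β ∈ RS.Δ) :
    ∃ n : ℤ, ⟪r, β⟫ = (n : ℝ) := by
  have hr' : r ∈ AddSubgroup.closure (corootVec '' RS.Δ) := hr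
  clear hr
  induction hr' using AddSubgroup.closure_induction with
  | mem x hx =>
    obtain ⟨α, hα, rfl⟩ := hx
    obtain ⟨n, hn⟩ := RS.crystallographic α hα β hβ
    refine ⟨n, ?_⟩
    rw [corootVec, real_inner_smul_left, ← hn]
    ring
  | zero => exact ⟨0, by simp⟩
  | add x y hx hy hix hiy =>
    obtain ⟨n, hn⟩ := hix
    obtain ⟨m, hm⟩ := hiy
    exact ⟨n + m, by rw [inner_add_left, hn, hm]; push_cast; ring⟩
  | neg x hx hix =>
    obtain ⟨n, hn⟩ := hix
    exact ⟨-n, by rw [inner_neg_left, hn]; push_cast; ring⟩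

/-- A simple reflection permutes the positive roots other than its own root. -/
lemma sRefl_simple_pos (i : Fin p) {γ : V} (hγ : γ ∈ RS.pos)
    (hne : γ ≠ RS.simpleRoot i) : sRefl (RS.simpleRoot i) γ ∈ RS.pos := by
  obtain ⟨hγΔ, c, hc⟩ := RS.mem_pos_iff.mp hγ
  have hiΔ := RS.simpleRoot_mem i
  have hex : ∃ j, j ≠ i ∧ c j ≠ 0 := by
    by_contra hall
    push_neg at hall
    have hγi : γ = (c i : ℝ) • RS.simpleRoot i := by
      rw [hc, Finset.sum_eq_single i]
      · intro b _ hb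
        rw [hall b hb, Nat.cast_zero, zero_smul]
      · intro h; exact absurd (Finset.mem_univ i) h
    have hred := RS.reduced (RS.simpleRoot i) hiΔ (c i) (hγi ▸ hγΔ)
    rcases hred with h1 | h1
    · exact hne (by rw [hγi, h1, one_smul])
    · have : (0:ℝ) ≤ (c i : ℝ) := Nat.cast_nonneg _
      rw [h1] at this; linarith
  have hsγΔ : sRefl (RS.simpleRoot i) γ ∈ RS.Δ := RS.reflect_mem _ hiΔ _ hγΔ
  rcases RS.pos_or_neg _ hsγΔ with h | h
  · exact h
  · exfalso
    obtain ⟨_, d, hd⟩ := RS.mem_pos_iff.mp h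
    set k := 2 * ⟪RS.simpleRoot i, γ⟫ / ⟪RS.simpleRoot i, RS.simpleRoot i⟫ with hk
    have heq : ∑ j, ((c j : ℝ) + (d j : ℝ)) • RS.simpleRoot j
        = ∑ j, (if j = i then k else (0:ℝ)) • RS.simpleRoot j := by
      have h1 : ∑ j, (if j = i then k else (0:ℝ)) • RS.simpleRoot j
          = k • RS.simpleRoot i := by
        rw [Finset.sum_eq_single i]
        · simp
        · intro b _ hb; simp [hb]
        · intro h; exact absurd (Finset.mem_univ i) h
      rw [h1]
      simp only [add_smul, Finset.sum_add_distrib, ← hc, ← hd]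
      rw [sRefl_apply, ← hk]
      abel
    have hcd := RS.coeff_eq heq
    obtain ⟨j, hji, hcj⟩ := hex
    have hj := congrFun hcd j
    simp only [if_neg hji] at hj
    have h1 : (0:ℝ) ≤ (c j : ℝ) := Nat.cast_nonneg _
    have h2 : (0:ℝ) ≤ (d j : ℝ) := Nat.cast_nonneg _
    have : (c j : ℝ) = 0 := by linarith
    exact hcj (by exact_mod_cast this)

/-- The product of simple reflections along a word. -/
def wordProd (l : List (Fin p)) : V ≃ₗ[ℝ] V :=
  (l.map fun i => sRefl (RS.simpleRoot i)).prod

lemma wordProd_nil : RS.wordProd [] = 1 := rfl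

lemma wordProd_cons (i : Fin p) (l : List (Fin p)) :
    RS.wordProd (i :: l) = sRefl (RS.simpleRoot i) * RS.wordProd l := by
  simp [wordProd]

lemma wordProd_append (l₁ l₂ : List (Fin p)) :
    RS.wordProd (l₁ ++ l₂) = RS.wordProd l₁ * RS.wordProd l₂ := by
  simp [wordProd]

lemma wordProd_mem (l : List (Fin p)) : RS.wordProd l ∈ RS.weylGroup := by
  apply Subgroup.list_prod_mem
  intro x hx
  simp only [List.mem_map] at hx
  obtain ⟨i, _, rfl⟩ := hx
  exact Subgroup.subset_closure ⟨RS.simpleRoot i, RS.simpleRoot_mem i, rfl⟩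

lemma wordProd_reverse (l : List (Fin p)) :
    RS.wordProd l.reverse = (RS.wordProd l)⁻¹ := by
  induction l with
  | nil => simp [wordProd]
  | cons i t ih =>
    rw [List.reverse_cons, RS.wordProd_append, ih, RS.wordProd_cons, RS.wordProd_cons,
      RS.wordProd_nil, mul_one, mul_inv_rev, sRefl_inv]

/-- Every positive root is the image of a simple root under a word in simple
reflections. -/
lemma pos_word_conj : ∀ β ∈ RS.pos, ∃ (l : List (Fin p)) (i : Fin p),
    β = RS.wordProd l (RS.simpleRoot i) := by
  suffices h : ∀ (n : ℕ), ∀ β ∈ RS.pos, ∀ c : Fin p → ℕ,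
      β = ∑ j, (c j : ℝ) • RS.simpleRoot j → ∑ j, c j = n →
      ∃ (l : List (Fin p)) (i : Fin p), β = RS.wordProd l (RS.simpleRoot i) by
    intro β hβ
    obtain ⟨hΔ, c, hc⟩ := RS.mem_pos_iff.mp hβ
    exact h _ β hβ c hc rfl
  intro n
  induction n using Nat.strong_induction_on with
  | _ n ih =>
  intro β hβ c hc hn
  by_cases hsimple : ∃ i, β = RS.simpleRoot i
  · obtain ⟨i, hi⟩ := hsimple
    exact ⟨[], i, by simpa [wordProd_nil] using hi⟩
  push_neg at hsimple
  have hβΔ : β ∈ RS.Δ := RS.pos_subset hβ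
  have hip : 0 < ⟪β, β⟫ := RS.inner_self_pos_of_mem hβΔ
  have hsum : ⟪β, β⟫ = ∑ j, (c j : ℝ) * ⟪β, RS.simpleRoot j⟫ := by
    nth_rewrite 2 [hc]
    rw [inner_sum]
    simp [real_inner_smul_right]
  have hex : ∃ i, 0 < (c i : ℝ) * ⟪β, RS.simpleRoot i⟫ := by
    by_contra hall
    push_neg at hall
    have : ⟪β, β⟫ ≤ 0 := by
      rw [hsum]
      exact Finset.sum_nonpos fun j _ => hall j
    linarith
  obtain ⟨i, hi⟩ := hex
  have hβα : 0 < ⟪RS.simpleRoot i, β⟫ := by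
    rw [real_inner_comm]
    by_contra hle
    push_neg at hle
    have : (c i : ℝ) * ⟪β, RS.simpleRoot i⟫ ≤ 0 :=
      mul_nonpos_of_nonneg_of_nonpos (Nat.cast_nonneg _) hle
    linarith
  have hαs : 0 < ⟪RS.simpleRoot i, RS.simpleRoot i⟫ :=
    RS.inner_self_pos_of_mem (RS.simpleRoot_mem i)
  set k := 2 * ⟪RS.simpleRoot i, β⟫ / ⟪RS.simpleRoot i, RS.simpleRoot i⟫ with hk
  have hkpos : 0 < k := div_pos (by linarith) hαs
  obtain ⟨m, hm⟩ := RS.crystallographic (RS.simpleRoot i) (RS.simpleRoot_mem i) β hβΔ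
  rw [← hk] at hm
  have hm1 : 1 ≤ m := by
    have : (0:ℝ) < (m:ℝ) := hm ▸ hkpos
    exact_mod_cast this
  have hγpos : sRefl (RS.simpleRoot i) β ∈ RS.pos :=
    RS.sRefl_simple_pos i hβ (hsimple i)
  obtain ⟨hγΔ, d, hd⟩ := RS.mem_pos_iff.mp hγpos
  -- compare coefficients: c j = d j + (if j = i then k else 0)
  have heq : ∑ j, (c j : ℝ) • RS.simpleRoot j
      = ∑ j, ((d j : ℝ) + (if j = i then k else 0)) • RS.simpleRoot j := by
    have h1 : ∑ j, (if j = i then k else (0:ℝ)) • RS.simpleRoot j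
        = k • RS.simpleRoot i := by
      rw [Finset.sum_eq_single i]
      · simp
      · intro b _ hb; simp [hb]
      · intro h; exact absurd (Finset.mem_univ i) h
    simp only [add_smul, Finset.sum_add_distrib, h1, ← hd, ← hc]
    rw [sRefl_apply, ← hk]
    abel
  have hcd := RS.coeff_eq heq
  have hdc : ∀ j, j ≠ i → d j = c j := by
    intro j hj
    have := congrFun hcd j
    simp only [if_neg hj, add_zero] at this
    exact_mod_cast this.symm
  have hdi : (d i : ℝ) + k = (c i : ℝ) := by
    have := congrFun hcd i
    simp only [if_true, eq_self_iff_true, ite_true] at this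
    linarith
  have hdilt : d i < c i := by
    have : (d i : ℝ) < (c i : ℝ) := by
      rw [← hdi]
      linarith
    exact_mod_cast this
  have hlt : ∑ j, d j < n := by
    rw [← hn]
    apply Finset.sum_lt_sum
    · intro j _
      by_cases hj : j = i
      · subst hj; exact hdilt.le
      · exact (hdc j hj).le
    · exact ⟨i, Finset.mem_univ i, hdilt⟩
  obtain ⟨l, i', hli⟩ := ih _ hlt _ hγpos d hd rfl
  refine ⟨i :: l, i', ?_⟩
  rw [RS.wordProd_cons]
  have : sRefl (RS.simpleRoot i) (sRefl (RS.simpleRoot i) β) = β :=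
    reflFun_involutive _ β
  rw [show (sRefl (RS.simpleRoot i) * RS.wordProd l) (RS.simpleRoot i')
      = sRefl (RS.simpleRoot i) (RS.wordProd l (RS.simpleRoot i')) from rfl, ← hli]
  exact this.symm

/-- The reflection in any positive root is a product of simple reflections. -/
lemma sRefl_pos_word {β : V} (hβ : β ∈ RS.pos) :
    ∃ l : List (Fin p), sRefl β = RS.wordProd l := by
  obtain ⟨l, i, hli⟩ := RS.pos_word_conj β hβ
  have hconj := sRefl_conj (RS.wordProd l)
    (RS.weyl_inner (RS.wordProd_mem l)) (RS.simpleRoot i)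
  refine ⟨(l ++ [i]) ++ l.reverse, ?_⟩
  have hsi : RS.wordProd [i] = sRefl (RS.simpleRoot i) := by
    rw [RS.wordProd_cons, RS.wordProd_nil, mul_one]
  rw [RS.wordProd_append, RS.wordProd_append, RS.wordProd_reverse, hsi, hli, hconj]

/-- Every element of the Weyl group is a product of simple reflections. -/
lemma weyl_word {w : V ≃ₗ[ℝ] V} (hw : w ∈ RS.weylGroup) :
    ∃ l : List (Fin p), w = RS.wordProd l := by
  induction hw using Subgroup.closure_induction with
  | mem u hu =>
    obtain ⟨α, hα, rfl⟩ := hu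
    rcases RS.pos_or_neg α hα with h | h
    · exact (RS.sRefl_pos_word h).imp fun l hl => hl
    · obtain ⟨l, hl⟩ := RS.sRefl_pos_word h
      exact ⟨l, by rw [← sRefl_neg α, hl]⟩
  | one => exact ⟨[], rfl⟩
  | mul u v hu hv hiu hiv =>
    obtain ⟨l₁, h₁⟩ := hiu
    obtain ⟨l₂, h₂⟩ := hiv
    exact ⟨l₁ ++ l₂, by rw [RS.wordProd_append, h₁, h₂]⟩
  | inv u hu hiu =>
    obtain ⟨l, hl⟩ := hiu
    exact ⟨l.reverse, by rw [RS.wordProd_reverse, hl]⟩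

lemma exists_flip {P : ℕ → Prop} (h0 : P 0) {m : ℕ} (hm : ¬ P m) :
    ∃ j < m, P j ∧ ¬ P (j+1) := by
  induction m with
  | zero => exact absurd h0 hm
  | succ n ih =>
    by_cases hn : P n
    · exact ⟨n, Nat.lt_succ_self n, hn, hm⟩
    · obtain ⟨j, hj, h1, h2⟩ := ih hn
      exact ⟨j, Nat.lt_succ_of_lt hj, h1, h2⟩

/-- Key lemma: a Weyl group element preserving the positive roots is trivial. -/
lemma word_pos_preserving_eq_one (l : List (Fin p))
    (h : ∀ β ∈ RS.pos, RS.wordProd l β ∈ RS.pos) : RS.wordProd l = 1 := by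
  suffices hgen : ∀ (n : ℕ) (l : List (Fin p)), l.length ≤ n →
      (∀ β ∈ RS.pos, RS.wordProd l β ∈ RS.pos) → RS.wordProd l = 1 by
    exact hgen l.length l le_rfl h
  clear h l
  intro n
  induction n with
  | zero =>
    intro l hl _
    have : l = [] := List.eq_nil_of_length_eq_zero (Nat.le_zero.mp hl)
    rw [this]; rfl
  | succ n ih =>
    intro l hl hpos
    rcases List.eq_nil_or_concat l with rfl | ⟨t, b, rfl⟩
    · rfl
    simp only [List.concat_eq_append] at hl hpos ⊢
    have hβpos := RS.simpleRoot_mem_pos b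
    have hβΔ := RS.simpleRoot_mem b
    have h0 : RS.wordProd (List.drop 0 t ++ [b]) (RS.simpleRoot b) ∈ RS.pos := by
      rw [List.drop_zero]; exact hpos _ hβpos
    have hm : ¬ (RS.wordProd (List.drop t.length t ++ [b]) (RS.simpleRoot b) ∈ RS.pos) := by
      rw [List.drop_length]
      have hs : RS.wordProd ([] ++ [b]) = sRefl (RS.simpleRoot b) := by
        rw [List.nil_append, RS.wordProd_cons, RS.wordProd_nil, mul_one]
      rw [hs, sRefl_apply_self _ (RS.root_ne_zero hβΔ)]
      intro hmem
      exact RS.not_pos_and_neg hβpos hmem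
    obtain ⟨j, hj, hPj, hPj1⟩ := RS.exists_flip
      (P := fun j => RS.wordProd (List.drop j t ++ [b]) (RS.simpleRoot b) ∈ RS.pos) h0 hm
    have hdropj : List.drop j t = t[j]'hj :: List.drop (j+1) t :=
      List.drop_eq_getElem_cons hj
    set a : Fin p := t[j]'hj with ha
    have hrel : RS.wordProd (List.drop j t ++ [b])
        = sRefl (RS.simpleRoot a) * RS.wordProd (List.drop (j+1) t ++ [b]) := by
      rw [hdropj, List.cons_append, RS.wordProd_cons]
    set u := RS.wordProd (List.drop (j+1) t ++ [b]) with hu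
    have humem : u ∈ RS.weylGroup := RS.wordProd_mem _
    have hγΔ : u (RS.simpleRoot b) ∈ RS.Δ := RS.weyl_maps_root humem _ hβΔ
    have hγneg : -(u (RS.simpleRoot b)) ∈ RS.pos := (RS.pos_or_neg _ hγΔ).resolve_left hPj1
    have hsa : sRefl (RS.simpleRoot a) (u (RS.simpleRoot b))
        = RS.wordProd (List.drop j t ++ [b]) (RS.simpleRoot b) := by
      rw [hrel]; rfl
    have hγ : u (RS.simpleRoot b) = -(RS.simpleRoot a) := by
      by_contra hne
      have hne2 : -(u (RS.simpleRoot b)) ≠ RS.simpleRoot a := by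
        intro hcontra
        exact hne (neg_eq_iff_eq_neg.mp hcontra)
      have h1 := RS.sRefl_simple_pos a hγneg hne2
      have h2 : sRefl (RS.simpleRoot a) (-(u (RS.simpleRoot b)))
          = -(RS.wordProd (List.drop j t ++ [b]) (RS.simpleRoot b)) := by
        rw [map_neg (sRefl (RS.simpleRoot a)) (u (RS.simpleRoot b)), hsa]
      rw [h2] at h1
      exact RS.not_pos_and_neg hPj h1
    have hconj := sRefl_conj u (RS.weyl_inner humem) (RS.simpleRoot b)
    rw [hγ, sRefl_neg] at hconj
    have hub : u = RS.wordProd (List.drop (j+1) t) * sRefl (RS.simpleRoot b) := by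
      rw [hu, RS.wordProd_append, RS.wordProd_cons, RS.wordProd_nil, mul_one]
    have hujeq : RS.wordProd (List.drop j t ++ [b]) = RS.wordProd (List.drop (j+1) t) := by
      rw [hrel, hconj, inv_mul_cancel_right, hub, mul_assoc, sRefl_mul_self, mul_one]
    have hw : RS.wordProd (t ++ [b]) = RS.wordProd (List.take j t ++ List.drop (j+1) t) := by
      conv_lhs => rw [← List.take_append_drop j t, List.append_assoc]
      rw [RS.wordProd_append, hujeq, ← RS.wordProd_append]
    rw [hw]
    apply ih
    · simp only [List.length_append, List.length_take, List.length_drop]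
      have hlen : t.length + 1 ≤ n + 1 := by simpa using hl
      have hjlen : j < t.length := hj
      omega
    · intro b2 hb2
      rw [← hw]
      exact hpos b2 hb2


lemma weyl_fixes_chamber {u : V ≃ₗ[ℝ] V} (hu : u ∈ RS.weylGroup) {x y : V}
    (hx : ∀ i, 0 < ⟪x, RS.simpleRoot i⟫) (hy : ∀ i, 0 < ⟪y, RS.simpleRoot i⟫)
    (hxy : u x = y) : u = 1 := by
  obtain ⟨l, hl⟩ := RS.weyl_word hu
  rw [hl]
  apply RS.word_pos_preserving_eq_one
  intro β hβ
  have hβΔ := RS.pos_subset hβ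
  have huβΔ : RS.wordProd l β ∈ RS.Δ := RS.weyl_maps_root (RS.wordProd_mem l) β hβΔ
  rw [RS.mem_pos_iff_inner hy huβΔ]
  have hval : ⟪y, RS.wordProd l β⟫ = ⟪x, β⟫ := by
    rw [← hxy, ← hl]
    exact RS.weyl_inner hu x β
  rw [hval]
  exact RS.inner_pos_of_chamber hx hβ

lemma weyl_finite : Finite RS.weylGroup := by
  haveI := RS.finite.to_subtype
  have hinj : Function.Injective
      (fun w : RS.weylGroup => (fun α : RS.Δ =>
        (⟨w.1 α.1, RS.weyl_maps_root w.2 α.1 α.2⟩ : RS.Δ))) := by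
    intro w₁ w₂ hw
    have h1 : ∀ α ∈ RS.Δ, w₁.1 α = w₂.1 α := by
      intro α hα
      exact Subtype.ext_iff.mp (congrFun hw ⟨α, hα⟩)
    apply Subtype.ext
    apply LinearEquiv.toLinearMap_injective
    apply LinearMap.ext_on RS.span_eq_top
    intro α hα
    exact h1 α hα
  exact Finite.of_injective _ hinj

/-- Existence of a strictly dominant vector. -/
lemma exists_chamber_vec : ∃ x₀ : V, ∀ i, 0 < ⟪x₀, RS.simpleRoot i⟫ := by
  haveI := RS.finDim
  have hspan : Submodule.span ℝ (Set.range RS.simpleRoot) = ⊤ := by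
    apply Submodule.eq_top_of_finrank_eq
    rw [finrank_span_eq_card RS.simpleRoot_indep, RS.finrank_eq, Fintype.card_fin]
  let T : V →ₗ[ℝ] (Fin p → ℝ) :=
    { toFun := fun x i => ⟪RS.simpleRoot i, x⟫
      map_add' := fun x y => by funext i; simp [inner_add_right]
      map_smul' := fun c x => by funext i; simp [real_inner_smul_right] }
  have hker : LinearMap.ker T = ⊥ := by
    rw [LinearMap.ker_eq_bot']
    intro x hx
    have hx2 : ∀ i, ⟪RS.simpleRoot i, x⟫ = 0 := fun i => congrFun hx i
    have hxmem : x ∈ Submodule.span ℝ (Set.range RS.simpleRoot) := by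
      rw [hspan]; trivial
    obtain ⟨c, hc⟩ := (Submodule.mem_span_range_iff_exists_fun ℝ).mp hxmem
    have hzero : ⟪x, x⟫ = 0 := by
      nth_rewrite 1 [← hc]
      rw [sum_inner]
      apply Finset.sum_eq_zero
      intro i _
      rw [real_inner_smul_left, hx2 i, mul_zero]
    exact inner_self_eq_zero.mp hzero
  have hrank := LinearMap.finrank_range_add_finrank_ker T
  rw [hker, finrank_bot, add_zero, RS.finrank_eq] at hrank
  have hrange : LinearMap.range T = ⊤ := by
    apply Submodule.eq_top_of_finrank_eq
    rw [hrank]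
    simp
  have hmem : (fun _ => (1:ℝ)) ∈ LinearMap.range T := by rw [hrange]; trivial
  obtain ⟨x₀, hx₀⟩ := hmem
  refine ⟨x₀, fun i => ?_⟩
  have h1 : ⟪RS.simpleRoot i, x₀⟫ = 1 := congrFun hx₀ i
  rw [real_inner_comm, h1]
  norm_num

/-- Existence of a chamber representative. -/
lemma exists_weyl_nonneg (z : V) :
    ∃ v ∈ RS.weylGroup, ∀ i, 0 ≤ ⟪v z, RS.simpleRoot i⟫ := by
  haveI := RS.weyl_finite
  obtain ⟨x₀, hx₀⟩ := RS.exists_chamber_vec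
  haveI : Nonempty RS.weylGroup := ⟨1⟩
  obtain ⟨v, hv⟩ := Finite.exists_max (fun w : RS.weylGroup => ⟪w.1 z, x₀⟫)
  refine ⟨v.1, v.2, fun i => ?_⟩
  have hsmem : sRefl (RS.simpleRoot i) ∈ RS.weylGroup :=
    Subgroup.subset_closure ⟨RS.simpleRoot i, RS.simpleRoot_mem i, rfl⟩
  have hle := hv (⟨sRefl (RS.simpleRoot i), hsmem⟩ * v)
  have hcalc : ((⟨sRefl (RS.simpleRoot i), hsmem⟩ * v : RS.weylGroup)).1 z
      = sRefl (RS.simpleRoot i) (v.1 z) := rfl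
  rw [hcalc, sRefl_apply, inner_sub_left, real_inner_smul_left] at hle
  have h1 : 0 < ⟪RS.simpleRoot i, x₀⟫ := by
    rw [real_inner_comm]; exact hx₀ i
  have h2 : 0 < ⟪RS.simpleRoot i, RS.simpleRoot i⟫ :=
    RS.inner_self_pos_of_mem (RS.simpleRoot_mem i)
  have h3 : 0 ≤ 2 * ⟪RS.simpleRoot i, v.1 z⟫ / ⟪RS.simpleRoot i, RS.simpleRoot i⟫ := by
    by_contra hneg
    push_neg at hneg
    nlinarith
  have h4 : 0 ≤ 2 * ⟪RS.simpleRoot i, v.1 z⟫ := by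
    have hmul := mul_nonneg h3 h2.le
    rw [div_mul_cancel₀] at hmul
    · linarith
    · exact h2.ne'
  rw [real_inner_comm]
  linarith

lemma weyl_inner_inv {w : V ≃ₗ[ℝ] V} (hw : w ∈ RS.weylGroup) (x y : V) :
    ⟪w⁻¹ x, y⟫ = ⟪x, w y⟫ := by
  have h := RS.weyl_inner hw (w⁻¹ x) y
  have hx : w (w⁻¹ x) = x := w.apply_symm_apply x
  rw [hx] at h
  exact h.symm

lemma dominant_cases {v : V ≃ₗ[ℝ] V} {r : V} (h : RS.IsDominantPair v r) (i : Fin p) :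
    v (RS.simpleRoot i) ∈ RS.Δ ∧
      (⟪RS.simpleRoot i, r⟫ < 0 ∨
        (⟪RS.simpleRoot i, r⟫ = 0 ∧ v (RS.simpleRoot i) ∈ RS.pos)) := by
  have hi := h.2.2 i
  simp only [affAct, affPos, Set.mem_setOf_eq] at hi
  obtain ⟨h1, h2⟩ := hi
  refine ⟨h1, ?_⟩
  rcases h2 with h2 | h2
  · left; linarith
  · right; exact ⟨by linarith [h2.1], h2.2⟩

lemma eventually_pos_aux {a b : ℝ} (h : 0 < b ∨ (b = 0 ∧ 0 < a)) :
    ∀ᶠ ε in nhdsWithin (0:ℝ) (Set.Ioi 0), 0 < ε * a + b := by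
  rcases h with hb | ⟨hb, ha⟩
  · have hc : Continuous fun ε : ℝ => ε * a + b := by continuity
    have h0 : (0:ℝ) * a + b ∈ Set.Ioi (0:ℝ) := by simpa using hb
    have hev := (hc.continuousAt (x := 0)).eventually_mem (isOpen_Ioi.mem_nhds h0)
    exact (hev.filter_mono nhdsWithin_le_nhds).mono (fun ε hε => hε)
  · subst hb
    filter_upwards [self_mem_nhdsWithin] with ε hε
    simpa using mul_pos hε ha

lemma dominant_chamber_eventually (x₀ : V) (hx₀ : ∀ i, 0 < ⟪x₀, RS.simpleRoot i⟫)
    {v : V ≃ₗ[ℝ] V} {r : V} (h : RS.IsDominantPair v r) :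
    ∀ᶠ ε in nhdsWithin (0:ℝ) (Set.Ioi 0),
      ∀ i, 0 < ⟪ε • ((v⁻¹ : V ≃ₗ[ℝ] V) x₀) - r, RS.simpleRoot i⟫ := by
  rw [Filter.eventually_all]
  intro i
  have hrw : ∀ ε : ℝ, ⟪ε • ((v⁻¹ : V ≃ₗ[ℝ] V) x₀) - r, RS.simpleRoot i⟫
      = ε * ⟪(v⁻¹ : V ≃ₗ[ℝ] V) x₀, RS.simpleRoot i⟫ + (- ⟪RS.simpleRoot i, r⟫) := by
    intro ε
    rw [inner_sub_left, real_inner_smul_left, real_inner_comm r]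
    ring
  simp only [hrw]
  obtain ⟨h1, h2⟩ := RS.dominant_cases h i
  apply RS.eventually_pos_aux
  rcases h2 with h2 | ⟨h2a, h2b⟩
  · left; linarith
  · right
    refine ⟨by rw [h2a, neg_zero], ?_⟩
    have hval : ⟪(v⁻¹ : V ≃ₗ[ℝ] V) x₀, RS.simpleRoot i⟫
        = ⟪x₀, v (RS.simpleRoot i)⟫ := RS.weyl_inner_inv h.1 x₀ (RS.simpleRoot i)
    rw [hval]
    exact RS.inner_pos_of_chamber hx₀ h2b

end RootSystemData

end Aux

/-- Let `w = v·t_r ∈ Ŵ`, with `v ∈ W` and `r ∈ Q∨`. Then: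
(i) if `w` is dominant, then `r` lies in the negative of the closure of the fundamental
Weyl chamber, i.e. `(r, α) ≤ 0` for all `α ∈ Π`; (ii) the map from the set of dominant
elements of `Ŵ` to `Q∨` sending `w = v·t_r` to `v(r)` is a bijection. -/
theorem statement0 {V : Type*} [NormedAddCommGroup V] [InnerProductSpace ℝ V] {p : ℕ}
    (RS : RootSystemData V p) :
    (∀ (v : V ≃ₗ[ℝ] V) (r : V), RS.IsDominantPair v r →
      ∀ i, ⟪r, RS.simpleRoot i⟫ ≤ 0) ∧
    Set.BijOn (fun vr : (V ≃ₗ[ℝ] V) × V => vr.1 vr.2)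
      {vr : (V ≃ₗ[ℝ] V) × V | RS.IsDominantPair vr.1 vr.2}
      (RS.corootLattice : Set V) := by
  constructor
  · intro v r hd i
    obtain ⟨h1, h2⟩ := RS.dominant_cases hd i
    rw [real_inner_comm]
    rcases h2 with h2 | h2
    · linarith
    · linarith [h2.1]
  refine ⟨?_, ?_, ?_⟩
  · -- maps to
    intro vr hvr
    exact RS.weyl_maps_lattice hvr.1 vr.2 hvr.2.1
  · -- injective
    rintro ⟨v₁, r₁⟩ h1 ⟨v₂, r₂⟩ h2 heq
    simp only [Set.mem_setOf_eq] at h1 h2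
    have heq2 : v₁ r₁ = v₂ r₂ := heq
    obtain ⟨x₀, hx₀⟩ := RS.exists_chamber_vec
    have E1 := RS.dominant_chamber_eventually x₀ hx₀ h1
    have E2 := RS.dominant_chamber_eventually x₀ hx₀ h2
    have E0 : ∀ᶠ ε in nhdsWithin (0:ℝ) (Set.Ioi 0), ε ∈ Set.Ioi (0:ℝ) :=
      self_mem_nhdsWithin
    obtain ⟨ε, hε0, hC1, hC2⟩ := (E0.and (E1.and E2)).exists
    have hval : v₁ (ε • ((v₁⁻¹ : V ≃ₗ[ℝ] V) x₀) - r₁)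
        = v₂ (ε • ((v₂⁻¹ : V ≃ₗ[ℝ] V) x₀) - r₂) := by
      have e1 : v₁ ((v₁⁻¹ : V ≃ₗ[ℝ] V) x₀) = x₀ := v₁.apply_symm_apply x₀
      have e2 : v₂ ((v₂⁻¹ : V ≃ₗ[ℝ] V) x₀) = x₀ := v₂.apply_symm_apply x₀
      rw [map_sub, map_sub, map_smul, map_smul, e1, e2, heq2]
    have hu : (v₂⁻¹ * v₁) (ε • ((v₁⁻¹ : V ≃ₗ[ℝ] V) x₀) - r₁)
        = ε • ((v₂⁻¹ : V ≃ₗ[ℝ] V) x₀) - r₂ := by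
      show v₂.symm (v₁ (ε • ((v₁⁻¹ : V ≃ₗ[ℝ] V) x₀) - r₁)) = _
      rw [hval]
      exact v₂.symm_apply_apply _
    have hone := RS.weyl_fixes_chamber (mul_mem (inv_mem h2.1) h1.1) hC1 hC2 hu
    have hv12 : v₁ = v₂ := (inv_mul_eq_one.mp hone).symm
    have hr12 : r₁ = r₂ := by
      apply v₁.injective
      calc v₁ r₁ = v₂ r₂ := heq2
        _ = v₁ r₂ := by rw [hv12]
    exact Prod.ext_iff.mpr ⟨hv12, hr12⟩
  · -- surjective
    intro q hq
    obtain ⟨x₀, hx₀⟩ := RS.exists_chamber_vec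
    have hfin : ((fun β => ⟪x₀, β⟫) '' RS.Δ).Finite := RS.finite.image _
    obtain ⟨M0, hM0⟩ := hfin.bddAbove
    have hmax0 : (0:ℝ) ≤ max M0 0 := le_max_right _ _
    set M := max M0 0 + 1 with hM
    have hMpos : 0 < M := by linarith
    have hMb : ∀ β ∈ RS.Δ, ⟪x₀, β⟫ < M := by
      intro β hβ
      have hb1 : ⟪x₀, β⟫ ≤ M0 := hM0 ⟨β, hβ, rfl⟩
      have hb2 : M0 ≤ max M0 0 := le_max_left _ _
      linarith
    set ε := 1 / M with hε
    have hεpos : 0 < ε := by positivity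
    obtain ⟨v', hv', hvz⟩ := RS.exists_weyl_nonneg (ε • x₀ - q)
    have hq2 : v' q ∈ RS.corootLattice := RS.weyl_maps_lattice hv' q hq
    refine ⟨(v'⁻¹, v' q), ?_, v'.symm_apply_apply q⟩
    simp only [Set.mem_setOf_eq]
    refine ⟨inv_mem hv', hq2, fun i => ?_⟩
    have hβΔ : (v'⁻¹ : V ≃ₗ[ℝ] V) (RS.simpleRoot i) ∈ RS.Δ :=
      RS.weyl_maps_root (inv_mem hv') _ (RS.simpleRoot_mem i)
    have h0 := hvz i
    rw [map_sub, map_smul, inner_sub_left, real_inner_smul_left] at h0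
    have ha : ⟪v' x₀, RS.simpleRoot i⟫
        = ⟪x₀, (v'⁻¹ : V ≃ₗ[ℝ] V) (RS.simpleRoot i)⟫ := by
      have h3 := RS.weyl_inner_inv hv' (RS.simpleRoot i) x₀
      calc ⟪v' x₀, RS.simpleRoot i⟫ = ⟪RS.simpleRoot i, v' x₀⟫ := real_inner_comm _ _
        _ = ⟪(v'⁻¹ : V ≃ₗ[ℝ] V) (RS.simpleRoot i), x₀⟫ := h3.symm
        _ = ⟪x₀, (v'⁻¹ : V ≃ₗ[ℝ] V) (RS.simpleRoot i)⟫ := real_inner_comm _ _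
    obtain ⟨n, hn⟩ := RS.lattice_pairing hq2 (RS.simpleRoot_mem i)
    have hbound : ⟪x₀, (v'⁻¹ : V ≃ₗ[ℝ] V) (RS.simpleRoot i)⟫ < M := hMb _ hβΔ
    have hlt1 : ε * ⟪v' x₀, RS.simpleRoot i⟫ < 1 := by
      rw [ha, hε, one_div_mul_eq_div, div_lt_one hMpos]
      exact hbound
    have hnle : (n:ℝ) < 1 := by rw [← hn]; linarith
    have hn1 : n < 1 := by exact_mod_cast hnle
    have hn0 : n ≤ 0 := by omega
    simp only [affAct, RootSystemData.affPos, Set.mem_setOf_eq]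
    refine ⟨hβΔ, ?_⟩
    rcases lt_or_eq_of_le hn0 with hlt | heq0
    · left
      have hval2 : ⟪RS.simpleRoot i, v' q⟫ < 0 := by
        rw [real_inner_comm, hn]
        exact_mod_cast hlt
      linarith
    · right
      have hzero : ⟪v' q, RS.simpleRoot i⟫ = 0 := by
        rw [hn]
        exact_mod_cast heq0
      have hzero2 : ⟪RS.simpleRoot i, v' q⟫ = 0 := by
        rw [real_inner_comm]; exact hzero
      constructor
      · rw [hzero2]
        ring
      · rw [RS.mem_pos_iff_inner hx₀ hβΔ]
        have h02 : 0 ≤ ε * ⟪v' x₀, RS.simpleRoot i⟫ := by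
          rw [hzero] at h0
          linarith
        have hane : ⟪x₀, (v'⁻¹ : V ≃ₗ[ℝ] V) (RS.simpleRoot i)⟫ ≠ 0 :=
          RS.inner_ne_zero_of_chamber hx₀ hβΔ
        have hge : 0 ≤ ⟪x₀, (v'⁻¹ : V ≃ₗ[ℝ] V) (RS.simpleRoot i)⟫ := by
          by_contra hlt2
          push_neg at hlt2
          have : ε * ⟪v' x₀, RS.simpleRoot i⟫ < 0 := by
            rw [ha]
            exact mul_neg_of_pos_of_neg hεpos hlt2
          linarith
        exact lt_of_le_of_ne hge (Ne.symm hane)
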